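/- For any quantum operation A with operator decomposition {Aᵢ} (i = 1,...,r) and any density operator ρ, there exists another operator decomposition {Bᵢ} of A (related to {Aᵢ} by an r×r unitary matrix, Bᵢ = Σⱼ uᵢⱼ Aⱼ) such that F_e(ρ, A) = |tr(B₁ ρ)|², i.e., tr(Bⱼ ρ) = 0 for all j ≥ 2. -/

import Mathlib

open scoped ComplexOrder in
/-- For any quantum operation with operator decomposition `{Aᵢ}` and any density operator
`ρ`, there is another decomposition `{Bᵢ}`, related to `{Aᵢ}` by a unitary matrix
`Bᵢ = Σⱼ uᵢⱼ Aⱼ`, such that `F_e(ρ, A) = |tr(B₁ρ)|²`, i.e. `tr(Bⱼρ) = 0` for `j ≥ 2`. -/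
theorem stmt_3 {d r : ℕ} (A : Fin (r + 1) → Matrix (Fin d) (Fin d) ℂ)
    (ρ : Matrix (Fin d) (Fin d) ℂ) (hρ : ρ.PosSemidef) (htr : ρ.trace = 1) :
    ∃ (u : Matrix (Fin (r + 1)) (Fin (r + 1)) ℂ)
      (B : Fin (r + 1) → Matrix (Fin d) (Fin d) ℂ),
      u ∈ Matrix.unitaryGroup (Fin (r + 1)) ℂ ∧
      (∀ i, B i = ∑ j, u i j • A j) ∧
      (∑ i, ‖(A i * ρ).trace‖ ^ 2 = ‖(B 0 * ρ).trace‖ ^ 2) ∧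
      (∀ j, j ≠ 0 → (B j * ρ).trace = 0) := by
  classical
  obtain ⟨v, hv⟩ : ∃ v : EuclideanSpace ℂ (Fin (r + 1)),
      ∀ k, v k = (A k * ρ).trace := ⟨WithLp.toLp 2 (fun k => (A k * ρ).trace), fun k => rfl⟩
  have htrB : ∀ (u : Matrix (Fin (r+1)) (Fin (r+1)) ℂ) (i : Fin (r+1)),
      (((∑ j, u i j • A j) : Matrix (Fin d) (Fin d) ℂ) * ρ).trace
        = ∑ j, u i j * v j := by
    intro u i
    rw [Finset.sum_mul, Matrix.trace_sum]
    simp [Matrix.smul_mul, hv]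
  by_cases h0 : v = 0
  · refine ⟨1, A, ?_, ?_, ?_, ?_⟩
    · exact Submonoid.one_mem _
    · intro i
      simp [Matrix.one_apply, ite_smul, Finset.sum_ite_eq, eq_comm]
    · have h : ∀ k, (A k * ρ).trace = 0 := by
        intro k; rw [← hv k, h0]; rfl
      simp [h]
    · intro j _
      rw [← hv j, h0]; rfl
  · have hnv : ‖v‖ ≠ 0 := norm_ne_zero_iff.mpr h0
    have h3 : ‖v‖ ^ 2 = ∑ i, ‖v i‖ ^ 2 := by
      rw [EuclideanSpace.norm_eq,
        Real.sq_sqrt (Finset.sum_nonneg fun i _ => sq_nonneg _)]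
    have h2 : ‖((‖v‖ : ℝ) : ℂ)‖ ^ 2 = ‖v‖ ^ 2 := by simp
    set x : EuclideanSpace ℂ (Fin (r + 1)) := (‖v‖ : ℂ)⁻¹ • v with hx
    have hxnorm : ‖x‖ = 1 := by
      rw [hx, norm_smul]
      simp [hnv]
    have hcard : Module.finrank ℂ (EuclideanSpace ℂ (Fin (r+1))) = Fintype.card (Fin (r+1)) := by
      simp
    have horth : Orthonormal ℂ (Set.restrict ({0} : Set (Fin (r+1))) (fun _ => x)) := by
      constructor
      · intro i; exact hxnorm
      · intro i j hij
        exact absurd (Subsingleton.elim i j) hij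
    obtain ⟨b, hb⟩ := horth.exists_orthonormalBasis_extension_of_card_eq hcard
    have hb0 : b 0 = x := hb 0 rfl
    have hbo : ∀ i j, (inner ℂ (b i) (b j) : ℂ) = if i = j then 1 else 0 := by
      have := b.orthonormal
      rw [orthonormal_iff_ite] at this
      exact this
    set u : Matrix (Fin (r+1)) (Fin (r+1)) ℂ :=
      Matrix.of fun i j => (starRingEnd ℂ) (b i j) with hu
    have hvx : v = (‖v‖ : ℂ) • b 0 := by
      rw [hb0, hx, smul_smul]
      simp [hnv]
    have hinner : ∀ i, (∑ j, u i j * v j) = (‖v‖ : ℂ) * (if i = 0 then 1 else 0) := by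
      intro i
      have h1 : (∑ j, u i j * v j) = inner ℂ (b i) v := by
        simp [hu, PiLp.inner_apply, RCLike.inner_apply, mul_comm]
      rw [h1]
      conv_lhs => rw [hvx]
      rw [inner_smul_right, hbo i 0]
    refine ⟨u, fun i => ∑ j, u i j • A j, ?_, fun i => rfl, ?_, ?_⟩
    · rw [Matrix.mem_unitaryGroup_iff]
      ext i j
      have h := hbo i j
      simp only [PiLp.inner_apply, RCLike.inner_apply, ← Complex.star_def] at h
      simp only [Matrix.mul_apply, Matrix.star_apply, hu, Matrix.of_apply,
        ← Complex.star_def, star_star]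
      simp only [mul_comm] at h ⊢
      rw [h, Matrix.one_apply]
    · rw [htrB u 0, hinner 0, if_pos rfl, mul_one]
      rw [h2, h3]
      exact Finset.sum_congr rfl fun i _ => by rw [hv i]
    · intro j hj
      rw [htrB u j, hinner j, if_neg hj, mul_zero]
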